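/- arXiv:2604.05370 — 3 statements merged into one kernel-verified Lean document; each statement's English description precedes it below -/
import Mathlib

section
/- (Smul'jan-type lemma, matrix version) For complex matrices X (n×n), Y (n×m), Z (m×m), the block matrix [[X, Y],[Y*, Z]] is positive semidefinite if and only if X and Z are positive semidefinite and there exists a matrix U with Z U = Y* and X − U* Z U positive semidefinite. -/
open scoped ComplexOrder Matrix
open Matrix

theorem quad_aux {m n : Type*} [Fintype m] [Fintype n] {X : Matrix n n ℂ}
    {Y : Matrix n m ℂ} {Z : Matrix m m ℂ} {U : Matrix m n ℂ}
    (hZ : Z.IsHermitian) (hU : Z * U = Yᴴ) (x : n → ℂ) (y : m → ℂ) :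
    (star (x ⊕ᵥ y)) ᵥ* (fromBlocks X Y Yᴴ Z) ⬝ᵥ (x ⊕ᵥ y) =
      (star (U *ᵥ x + y)) ᵥ* Z ⬝ᵥ (U *ᵥ x + y) +
        (star x) ᵥ* (X - Uᴴ * Z * U) ⬝ᵥ x := by
  have hY : Y = Uᴴ * Z := by
    rw [← conjTranspose_conjTranspose Y, ← hU, conjTranspose_mul, hZ.eq]
  subst hY
  simp [Function.star_sumElim, fromBlocks_mulVec, vecMul_fromBlocks, add_vecMul,
    dotProduct_mulVec, vecMul_sub, Matrix.mul_assoc, vecMul_mulVec, hZ.eq,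
    star_mulVec, star_add, add_dotProduct, dotProduct_add, sub_dotProduct]
  abel

/-- Smul'jan-type lemma: the block matrix [[X, Y],[Y*, Z]] is positive
semidefinite iff X, Z are positive semidefinite and there is U with Z U = Y* and
X − U* Z U positive semidefinite. -/
theorem stmt_7 (n m : ℕ) (X : Matrix (Fin n) (Fin n) ℂ)
    (Y : Matrix (Fin n) (Fin m) ℂ) (Z : Matrix (Fin m) (Fin m) ℂ) :
    (Matrix.fromBlocks X Y Yᴴ Z).PosSemidef ↔
      X.PosSemidef ∧ Z.PosSemidef ∧
        ∃ U : Matrix (Fin m) (Fin n) ℂ, Z * U = Yᴴ ∧ (X - Uᴴ * Z * U).PosSemidef := by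
  constructor
  · intro h
    have hX : X.PosSemidef := by
      have := h.submatrix (Sum.inl : Fin n → Fin n ⊕ Fin m)
      exact this
    have hZ : Z.PosSemidef := by
      have := h.submatrix (Sum.inr : Fin m → Fin n ⊕ Fin m)
      exact this
    refine ⟨hX, hZ, ?_⟩
    have hker : ∀ y : Fin m → ℂ, Z *ᵥ y = 0 → Y *ᵥ y = 0 := by
      intro y hy
      have h0 : star ((0 : Fin n → ℂ) ⊕ᵥ y) ⬝ᵥ
          (fromBlocks X Y Yᴴ Z *ᵥ ((0 : Fin n → ℂ) ⊕ᵥ y)) = 0 := by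
        simp [fromBlocks_mulVec, hy, Function.star_sumElim]
      have h1 := (h.dotProduct_mulVec_zero_iff _).mp h0
      funext i
      have := congrFun h1 (Sum.inl i)
      simpa [fromBlocks_mulVec] using this
    have hZh := hZ.1
    set V : Matrix (Fin m) (Fin m) ℂ := (hZh.eigenvectorUnitary : Matrix (Fin m) (Fin m) ℂ) with hV
    set e := hZh.eigenvalues with he
    have hVV : star V * V = 1 := Unitary.coe_star_mul_self _
    have hspec : Z = V * diagonal (fun i => (e i : ℂ)) * star V := hZh.spectral_theorem
    have hdmul : ∀ f g : Fin m → ℂ,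
        (V * diagonal f * star V) * (V * diagonal g * star V) =
          V * diagonal (fun i => f i * g i) * star V := by
      intro f g
      have h1 : (V * diagonal f * star V) * (V * diagonal g * star V)
          = V * (diagonal f * ((star V * V) * (diagonal g * star V))) := by
        simp only [Matrix.mul_assoc]
      rw [h1, hVV, Matrix.one_mul, ← Matrix.mul_assoc, ← Matrix.mul_assoc,
        Matrix.mul_assoc V, diagonal_mul_diagonal]
    set Zp : Matrix (Fin m) (Fin m) ℂ :=
      V * diagonal (fun i => ((e i : ℂ))⁻¹) * star V with hZp
    have hP : Z * Zp = V * diagonal (fun i => (e i : ℂ) * (e i : ℂ)⁻¹) * star V := by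
      rw [hspec, hZp, hdmul]
    have hee : (fun i => (e i : ℂ) * ((e i : ℂ) * (e i : ℂ)⁻¹)) = (fun i => (e i : ℂ)) := by
      funext i
      rcases eq_or_ne ((e i : ℂ)) 0 with h0 | h0
      · simp [h0]
      · field_simp
    have hZZp : Z * (Z * Zp) = Z := by
      rw [hP]
      conv_lhs => rw [hspec]
      simp only [hdmul, hee]
      rw [← hspec]
    have hg : star (fun i => (e i : ℂ) * (e i : ℂ)⁻¹) = fun i => (e i : ℂ) * (e i : ℂ)⁻¹ := by
      funext i
      simp only [Pi.star_apply, star_mul', ← Complex.ofReal_inv, Complex.star_def,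
        Complex.conj_ofReal, mul_comm]
    have hPH : (Z * Zp)ᴴ = Z * Zp := by
      rw [hP, star_eq_conjTranspose, conjTranspose_mul, conjTranspose_mul,
        conjTranspose_conjTranspose, diagonal_conjTranspose, hg, Matrix.mul_assoc]
    have hYP : Y * (Z * Zp) = Y := by
      have hcols : Y * (1 - Z * Zp) = 0 := by
        ext i j
        have hZ0 : Z * (1 - Z * Zp) = 0 := by
          rw [Matrix.mul_sub, Matrix.mul_one, hZZp, sub_self]
        have hcol : Z *ᵥ (fun k => (1 - Z * Zp) k j) = 0 := by
          funext i'
          have := congrFun (congrFun hZ0 i') j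
          simpa [mulVec, dotProduct, Matrix.mul_apply] using this
        have := congrFun (hker _ hcol) i
        simpa [mulVec, dotProduct, Matrix.mul_apply] using this
      rw [Matrix.mul_sub, Matrix.mul_one, sub_eq_zero] at hcols
      exact hcols.symm
    have hU : Z * (Zp * Yᴴ) = Yᴴ := by
      rw [← Matrix.mul_assoc]
      calc (Z * Zp) * Yᴴ = (Y * (Z * Zp)ᴴ)ᴴ := by
            rw [conjTranspose_mul, conjTranspose_conjTranspose]
        _ = Yᴴ := by rw [hPH, hYP]
    refine ⟨Zp * Yᴴ, hU, ?_⟩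
    set U := Zp * Yᴴ
    refine PosSemidef.of_dotProduct_mulVec_nonneg (hX.1.sub (isHermitian_conjTranspose_mul_mul U hZh)) (fun x => ?_)
    have key := quad_aux (X := X) hZh hU x (-(U *ᵥ x))
    rw [add_neg_cancel] at key
    simp only [star_zero, zero_vecMul, zero_dotProduct, zero_add] at key
    rw [dotProduct_mulVec, ← key, ← dotProduct_mulVec]
    exact h.dotProduct_mulVec_nonneg _
  · rintro ⟨hX, hZ, U, hU, hS⟩
    rw [posSemidef_iff_dotProduct_mulVec]
    constructor
    · rw [isHermitian_fromBlocks_iff]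
      exact ⟨hX.1, rfl, conjTranspose_conjTranspose Y, hZ.1⟩
    · intro v
      rw [dotProduct_mulVec, ← Sum.elim_comp_inl_inr v, quad_aux hZ.1 hU]
      have h1 : 0 ≤ (star (U *ᵥ (v ∘ Sum.inl) + v ∘ Sum.inr)) ᵥ* Z ⬝ᵥ
          (U *ᵥ (v ∘ Sum.inl) + v ∘ Sum.inr) := by
        rw [← dotProduct_mulVec]; exact hZ.dotProduct_mulVec_nonneg _
      have h2 : 0 ≤ (star (v ∘ Sum.inl)) ᵥ* (X - Uᴴ * Z * U) ⬝ᵥ (v ∘ Sum.inl) := by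
        rw [← dotProduct_mulVec]; exact hS.dotProduct_mulVec_nonneg _
      exact add_nonneg h1 h2
end

section
/- For Hermitian positive semidefinite n×n matrices A and C and an arbitrary n×n matrix B, the block matrix [[A, B*],[B, C]] is positive semidefinite if and only if |⟨Bx, y⟩|² ≤ ⟨Ax, x⟩·⟨Cy, y⟩ for all vectors x, y ∈ ℂⁿ. -/
open scoped ComplexOrder Matrix
open Matrix

private lemma quad_expand {n : ℕ} (A B C : Matrix (Fin n) (Fin n) ℂ) (x y : Fin n → ℂ) :
    star (Sum.elim x y) ⬝ᵥ (Matrix.fromBlocks A Bᴴ B C *ᵥ Sum.elim x y)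
      = star x ⬝ᵥ (A *ᵥ x) + star y ⬝ᵥ (C *ᵥ y)
        + (star y ⬝ᵥ (B *ᵥ x) + star (star y ⬝ᵥ (B *ᵥ x))) := by
  have hstar : star (Sum.elim x y) = Sum.elim (star x) (star y) := by
    ext i; cases i <;> rfl
  rw [fromBlocks_mulVec, hstar, sumElim_dotProduct_sumElim]
  simp only [Sum.elim_comp_inl, Sum.elim_comp_inr, dotProduct_add]
  have : star x ⬝ᵥ (Bᴴ *ᵥ y) = star (star y ⬝ᵥ (B *ᵥ x)) := by
    rw [star_dotProduct]
    simp [star_mulVec, dotProduct_mulVec, vecMul_conjTranspose]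
  rw [this]; ring

private lemma scalar_key {a c : ℝ} {b : ℂ} (ha : 0 ≤ a) (hc : 0 ≤ c)
    (h : ∀ t : ℝ, 0 ≤ a + t ^ 2 * Complex.normSq b * c + 2 * (t * Complex.normSq b)) :
    ‖b‖ ^ 2 ≤ a * c := by
  rw [Complex.sq_norm]
  by_cases hb : b = 0
  · simpa [hb] using mul_nonneg ha hc
  · have hnb : 0 < Complex.normSq b := Complex.normSq_pos.2 hb
    by_cases hc0 : c = 0
    · exfalso
      have h1 := h (-(a + 1) / (2 * Complex.normSq b))
      rw [hc0] at h1
      have h2 : -(a + 1) / (2 * Complex.normSq b) * Complex.normSq b = -(a+1)/2 := by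
        field_simp
      rw [h2] at h1
      linarith
    · have hc' : 0 < c := lt_of_le_of_ne hc (Ne.symm hc0)
      have h1 := h (-1 / c)
      have h2 : (-1 / c) ^ 2 * Complex.normSq b * c = Complex.normSq b / c := by
        field_simp
      have h3 : 2 * (-1 / c * Complex.normSq b) = -(2 * (Complex.normSq b / c)) := by
        field_simp
      rw [h2, h3] at h1
      have h4 : Complex.normSq b / c ≤ a := by linarith
      calc Complex.normSq b = Complex.normSq b / c * c := by field_simp
        _ ≤ a * c := mul_le_mul_of_nonneg_right h4 hc

/-- For PSD Hermitian A, C and arbitrary B, the block matrix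
[[A, B*],[B, C]] is PSD iff |⟨Bx, y⟩|² ≤ ⟨Ax, x⟩·⟨Cy, y⟩ for all x, y. -/
theorem stmt_8 (n : ℕ) (A B C : Matrix (Fin n) (Fin n) ℂ)
    (hA : A.PosSemidef) (hC : C.PosSemidef) :
    (Matrix.fromBlocks A Bᴴ B C).PosSemidef ↔
      ∀ x y : Fin n → ℂ,
        ‖star y ⬝ᵥ (B *ᵥ x)‖ ^ 2
          ≤ (star x ⬝ᵥ (A *ᵥ x)).re * (star y ⬝ᵥ (C *ᵥ y)).re := by
  constructor
  · intro hPSD x y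
    set b := star y ⬝ᵥ (B *ᵥ x) with hb
    have haRe : (0:ℝ) ≤ (star x ⬝ᵥ (A *ᵥ x)).re := (Complex.nonneg_iff.1 (hA.dotProduct_mulVec_nonneg x)).1
    have hcRe : (0:ℝ) ≤ (star y ⬝ᵥ (C *ᵥ y)).re := (Complex.nonneg_iff.1 (hC.dotProduct_mulVec_nonneg y)).1
    refine scalar_key haRe hcRe (fun t => ?_)
    have key := hPSD.dotProduct_mulVec_nonneg (Sum.elim x (((t:ℂ) * b) • y))
    rw [quad_expand] at key
    have e1 : star (((t:ℂ) * b) • y) ⬝ᵥ (C *ᵥ (((t:ℂ) * b) • y))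
        = ((t^2 * Complex.normSq b : ℝ) : ℂ) * (star y ⬝ᵥ (C *ᵥ y)) := by
      rw [star_smul, smul_dotProduct, mulVec_smul, dotProduct_smul]
      push_cast
      rw [smul_eq_mul, smul_eq_mul, star_mul', Complex.star_def, ← mul_assoc]
      rw [show (starRingEnd ℂ) ((t:ℂ)) * (starRingEnd ℂ) b * ((t:ℂ) * b)
          = (t:ℂ) * (starRingEnd ℂ) ((t:ℂ)) * ((starRingEnd ℂ) b * b) by ring]
      rw [Complex.conj_mul', Complex.conj_ofReal, Complex.normSq_eq_norm_sq]
      push_cast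
      ring
    have e2 : star (((t:ℂ) * b) • y) ⬝ᵥ (B *ᵥ x) = ((t * Complex.normSq b : ℝ) : ℂ) := by
      rw [star_smul, smul_dotProduct, smul_eq_mul, star_mul', Complex.star_def, ← hb]
      rw [show (starRingEnd ℂ) ((t:ℂ)) * (starRingEnd ℂ) b * b
          = (starRingEnd ℂ) ((t:ℂ)) * ((starRingEnd ℂ) b * b) by ring]
      rw [Complex.conj_mul', Complex.conj_ofReal, Complex.normSq_eq_norm_sq]
      push_cast
      rfl
    rw [e1, e2] at key
    have hre := (Complex.nonneg_iff.1 key).1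
    simp only [Complex.add_re, Complex.re_ofReal_mul, Complex.ofReal_re, Complex.star_def,
      Complex.conj_re] at hre
    linarith
  · intro h
    refine Matrix.PosSemidef.of_dotProduct_mulVec_nonneg (Matrix.IsHermitian.fromBlocks hA.1 (conjTranspose_conjTranspose B) hC.1) (fun z => ?_)
    have hz : z = Sum.elim (z ∘ Sum.inl) (z ∘ Sum.inr) := (Sum.elim_comp_inl_inr z).symm
    rw [hz, quad_expand]
    set x := z ∘ Sum.inl
    set y := z ∘ Sum.inr
    set b := star y ⬝ᵥ (B *ᵥ x) with hb
    obtain ⟨haRe, haIm⟩ := Complex.nonneg_iff.1 (hA.dotProduct_mulVec_nonneg x)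
    obtain ⟨hcRe, hcIm⟩ := Complex.nonneg_iff.1 (hC.dotProduct_mulVec_nonneg y)
    have hre2 : b.re ^ 2 ≤ ‖b‖ ^ 2 := by
      rw [Complex.sq_norm, Complex.normSq_apply]; nlinarith [sq_nonneg b.im]
    have hineq := h x y
    rw [Complex.nonneg_iff]
    constructor
    · simp only [Complex.add_re, Complex.star_def, Complex.conj_re]
      nlinarith [sq_nonneg ((star x ⬝ᵥ (A *ᵥ x)).re - (star y ⬝ᵥ (C *ᵥ y)).re),
        sq_nonneg ((star x ⬝ᵥ (A *ᵥ x)).re + (star y ⬝ᵥ (C *ᵥ y)).re + 2 * b.re)]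
    · simp only [Complex.add_im, Complex.star_def, Complex.conj_im]
      rw [← haIm, ← hcIm]; ring
end

section
/- (Propagation step for 2-hyponormal matrix-valued shifts) Let (Aₙ) be positive definite n×n matrices and suppose that for every x, y the inequality |⟨(Aₙ Aₙ₊₁² − Aₙ₋₁² Aₙ)y, x⟩|² ≤ ⟨(Aₙ² − Aₙ₋₁²)x, x⟩·⟨(Aₙ₊₁Aₙ₊₂²Aₙ₊₁ − AₙAₙ₋₁²Aₙ)y, y⟩ holds. If x is a vector with Aₙx = Aₙ₋₁x = x, then Aₙ₊₁² x = x, and hence (since Aₙ₊₁ is positive definite) Aₙ₊₁ x = x. -/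
open scoped ComplexOrder Matrix

/-- Propagation step for 2-hyponormal matrix-valued shifts: if the
2-hyponormality inequality
|⟨(Aₙ Aₙ₊₁² − Aₙ₋₁² Aₙ)y, x⟩|² ≤ ⟨(Aₙ² − Aₙ₋₁²)x, x⟩·⟨(Aₙ₊₁Aₙ₊₂²Aₙ₊₁ − AₙAₙ₋₁²Aₙ)y, y⟩
holds for all x, y, and Aₙx = Aₙ₋₁x = x, then Aₙ₊₁²x = x and hence Aₙ₊₁x = x. -/
theorem stmt_15 (d n : ℕ) (hn : 1 ≤ n) (A : ℕ → Matrix (Fin d) (Fin d) ℂ)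
    (hA : ∀ k, (A k).PosDef)
    (hineq : ∀ x y : Fin d → ℂ,
      ‖star x ⬝ᵥ ((A n * (A (n+1) * A (n+1)) - (A (n-1) * A (n-1)) * A n) *ᵥ y)‖ ^ 2
        ≤ (star x ⬝ᵥ ((A n * A n - A (n-1) * A (n-1)) *ᵥ x)).re
          * (star y ⬝ᵥ ((A (n+1) * (A (n+2) * A (n+2)) * A (n+1)
              - A n * (A (n-1) * A (n-1)) * A n) *ᵥ y)).re)
    (x : Fin d → ℂ) (hx1 : A n *ᵥ x = x) (hx2 : A (n-1) *ᵥ x = x) :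
    (A (n+1) * A (n+1)) *ᵥ x = x ∧ A (n+1) *ᵥ x = x := by
  set M : Matrix (Fin d) (Fin d) ℂ :=
    A n * (A (n+1) * A (n+1)) - (A (n-1) * A (n-1)) * A n with hMdef
  have h0 : (A n * A n - A (n-1) * A (n-1)) *ᵥ x = 0 := by
    rw [Matrix.sub_mulVec, ← Matrix.mulVec_mulVec, ← Matrix.mulVec_mulVec,
      hx1, hx1, hx2, hx2, sub_self]
  have hMx : ∀ y : Fin d → ℂ, star x ⬝ᵥ (M *ᵥ y) = 0 := by
    intro y
    have h := hineq x y
    rw [h0, dotProduct_zero] at h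
    simp only [Complex.zero_re, zero_mul] at h
    have h1 : ‖star x ⬝ᵥ (M *ᵥ y)‖ = 0 := by
      nlinarith [norm_nonneg (star x ⬝ᵥ (M *ᵥ y))]
    exact norm_eq_zero.1 h1
  have hv : Mᴴ *ᵥ x = 0 := by
    have h := hMx (Mᴴ *ᵥ x)
    rw [Matrix.dotProduct_mulVec] at h
    have hs : star (Mᴴ *ᵥ x) = star x ᵥ* M := by
      rw [Matrix.star_mulVec, Matrix.conjTranspose_conjTranspose]
    have : star (Mᴴ *ᵥ x) ⬝ᵥ (Mᴴ *ᵥ x) = 0 := by rw [hs]; exact h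
    exact dotProduct_star_self_eq_zero.1 this
  have hMH : Mᴴ = (A (n+1) * A (n+1)) * A n - A n * (A (n-1) * A (n-1)) := by
    simp [hMdef, Matrix.conjTranspose_sub, Matrix.conjTranspose_mul,
      (hA n).1.eq, (hA (n+1)).1.eq, (hA (n-1)).1.eq, Matrix.mul_assoc]
  rw [hMH, Matrix.sub_mulVec] at hv
  simp only [← Matrix.mulVec_mulVec, hx1, hx2] at hv
  rw [sub_eq_zero] at hv
  refine ⟨by rw [← Matrix.mulVec_mulVec]; exact hv, ?_⟩
  set B : Matrix (Fin d) (Fin d) ℂ := A (n+1) with hBdef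
  have hw : (B + 1) *ᵥ (B *ᵥ x - x) = 0 := by
    rw [Matrix.add_mulVec, Matrix.one_mulVec, Matrix.mulVec_sub, hv]
    abel
  by_contra hne
  have hwne : B *ᵥ x - x ≠ 0 := fun h => hne (by rwa [sub_eq_zero] at h)
  have hpos : (B + 1).PosDef := (hA (n+1)).add_posSemidef Matrix.PosSemidef.one
  have := hpos.dotProduct_mulVec_pos hwne
  rw [hw, dotProduct_zero] at this
  exact lt_irrefl _ this
end
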